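/- Let a, b, c be strictly positive real numbers. Then the function f(x) = x·ln(1 + a/(b + c·x)) is concave and monotonically increasing on (0, ∞); in particular f''(x) < 0 and f'(x) > 0 for all x > 0. -/

import Mathlib

/-- For `a, b, c > 0`, the function `f(x) = x·ln(1 + a/(b + cx))` is
concave and monotonically increasing on `(0, ∞)`; in particular `f''(x) < 0` and
`f'(x) > 0` for all `x > 0`. -/
theorem rate_concave_increasing_in_Td (a b c : ℝ) (ha : 0 < a) (hb : 0 < b)
    (hc : 0 < c) :
    let f : ℝ → ℝ := fun x => x * Real.log (1 + a / (b + c * x))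
    ConcaveOn ℝ (Set.Ioi (0 : ℝ)) f ∧
    StrictMonoOn f (Set.Ioi (0 : ℝ)) ∧
    ∀ x : ℝ, 0 < x → deriv (deriv f) x < 0 ∧ 0 < deriv f x := by
  intro f
  -- positivity facts
  have hB : ∀ x : ℝ, 0 < x → 0 < b + c * x := fun x hx => by positivity
  have hA : ∀ x : ℝ, 0 < x → 0 < a + b + c * x := fun x hx => by positivity
  -- g: rewritten form of f on Ioi 0
  set g : ℝ → ℝ := fun x => x * (Real.log (a + b + c * x) - Real.log (b + c * x)) with hgdef
  have hfg : ∀ x ∈ Set.Ioi (0:ℝ), f x = g x := by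
    intro x hx
    have hBx := hB x hx
    have hAx := hA x hx
    simp only [f, g]
    rw [show 1 + a / (b + c * x) = (a + b + c * x) / (b + c * x) by field_simp; ring,
      Real.log_div hAx.ne' hBx.ne']
  -- first derivative formula
  set F : ℝ → ℝ := fun x => (Real.log (a + b + c * x) - Real.log (b + c * x))
      + x * (c / (a + b + c * x) - c / (b + c * x)) with hFdef
  have hlin : ∀ d x : ℝ, HasDerivAt (fun x : ℝ => d + c * x) c x := by
    intro d x
    simpa using ((hasDerivAt_id x).const_mul c).const_add d
  have hgF : ∀ x ∈ Set.Ioi (0:ℝ), HasDerivAt g (F x) x := by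
    intro x hx
    have hBx := hB x hx
    have hAx := hA x hx
    have hid : HasDerivAt (fun y : ℝ => y) 1 x := hasDerivAt_id' x
    have h1 : HasDerivAt (fun x : ℝ => Real.log (a + b + c * x)) (c / (a + b + c * x)) x := by
      simpa using ((hlin (a+b) x).log (by linarith)).congr_deriv (by ring)
    have h2 : HasDerivAt (fun x : ℝ => Real.log (b + c * x)) (c / (b + c * x)) x := by
      simpa using ((hlin b x).log hBx.ne')
    have := (hid.mul (h1.sub h2))
    simpa [g, F, Pi.mul_def, Pi.sub_def] using this.congr_deriv (by simp only [Pi.sub_apply]; ring)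
  -- deriv f = F on Ioi 0
  have hEv : ∀ x ∈ Set.Ioi (0:ℝ), f =ᶠ[nhds x] g := by
    intro x hx
    filter_upwards [isOpen_Ioi.mem_nhds hx] with y hy using hfg y hy
  have hderivf : ∀ x ∈ Set.Ioi (0:ℝ), deriv f x = F x := by
    intro x hx
    rw [(hEv x hx).deriv_eq, (hgF x hx).deriv]
  -- second derivative formula
  set G : ℝ → ℝ := fun x => 2 * (c / (a + b + c * x) - c / (b + c * x))
      + x * ((-(c*c) / (a + b + c * x)^2) - (-(c*c) / (b + c * x)^2)) with hGdef
  have hFG : ∀ x ∈ Set.Ioi (0:ℝ), HasDerivAt F (G x) x := by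
    intro x hx
    have hBx := hB x hx
    have hAx := hA x hx
    have h1 : HasDerivAt (fun x : ℝ => Real.log (a + b + c * x)) (c / (a + b + c * x)) x := by
      simpa using ((hlin (a+b) x).log (by linarith)).congr_deriv (by ring)
    have hid : HasDerivAt (fun y : ℝ => y) 1 x := hasDerivAt_id' x
    have h2 : HasDerivAt (fun x : ℝ => Real.log (b + c * x)) (c / (b + c * x)) x := by
      simpa using ((hlin b x).log hBx.ne')
    have h3 : HasDerivAt (fun x : ℝ => c / (a + b + c * x)) (-(c*c) / (a + b + c * x)^2) x := by
      have := ((hlin (a+b) x).inv (by linarith)).const_mul c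
      simp only [div_eq_mul_inv]
      exact this.congr_deriv (by ring)
    have h4 : HasDerivAt (fun x : ℝ => c / (b + c * x)) (-(c*c) / (b + c * x)^2) x := by
      have := ((hlin b x).inv hBx.ne').const_mul c
      simp only [div_eq_mul_inv]
      exact this.congr_deriv (by ring)
    have := (h1.sub h2).add (hid.mul (h3.sub h4))
    simpa [F, G, Pi.add_def, Pi.mul_def, Pi.sub_def] using this.congr_deriv (by simp only [Pi.sub_apply]; ring)
  -- deriv F = G on Ioi 0, and deriv (deriv f) = G
  have hderiv2 : ∀ x ∈ Set.Ioi (0:ℝ), deriv (deriv f) x = G x := by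
    intro x hx
    have hEv2 : deriv f =ᶠ[nhds x] F := by
      filter_upwards [isOpen_Ioi.mem_nhds hx] with y hy using hderivf y hy
    rw [hEv2.deriv_eq, (hFG x hx).deriv]
  -- sign of G
  have hGneg : ∀ x ∈ Set.Ioi (0:ℝ), G x < 0 := by
    intro x hx
    have hx' : (0:ℝ) < x := hx
    have hBx := hB x hx
    have hAx := hA x hx
    have hkey : G x = c * a * (c*x*((a+b+c*x) + (b+c*x)) - 2*(a+b+c*x)*(b+c*x))
        / ((a+b+c*x)^2 * (b+c*x)^2) := by
      simp only [G]; field_simp; ring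
    rw [hkey]
    apply div_neg_of_neg_of_pos _ (by positivity)
    have hnum : c*x*((a+b+c*x) + (b+c*x)) - 2*(a+b+c*x)*(b+c*x) < 0 := by
      nlinarith [mul_pos hAx hBx, mul_pos hb hAx, mul_pos hb hBx, mul_pos ha hBx]
    nlinarith [mul_pos (mul_pos hc ha) (neg_pos.mpr hnum)]
  -- sign of F
  have hFpos : ∀ x ∈ Set.Ioi (0:ℝ), 0 < F x := by
    intro x hx
    have hx' : (0:ℝ) < x := hx
    have hBx := hB x hx
    have hAx := hA x hx
    have hlog : Real.log ((b + c*x) / (a + b + c*x)) < (b + c*x)/(a + b + c*x) - 1 := by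
      apply Real.log_lt_sub_one_of_pos (by positivity)
      intro h
      have : (b + c*x) = (a + b + c*x) := by
        field_simp at h; linarith
      linarith
    have hlogdiv : Real.log ((b + c*x) / (a + b + c*x))
        = Real.log (b + c*x) - Real.log (a + b + c*x) :=
      Real.log_div hBx.ne' hAx.ne'
    have h1 : Real.log (a + b + c*x) - Real.log (b + c*x) > a / (a + b + c*x) := by
      rw [hlogdiv] at hlog
      have : (b + c*x)/(a + b + c*x) - 1 = -(a/(a + b + c*x)) := by
        field_simp; ring
      linarith [hlog.trans_eq this]
    have h2 : x * (c / (a + b + c * x) - c / (b + c * x))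
        = -(x*c*a / ((a+b+c*x)*(b+c*x))) := by field_simp; ring
    have h3 : a / (a + b + c*x) - x*c*a / ((a+b+c*x)*(b+c*x))
        = a*b / ((a+b+c*x)*(b+c*x)) := by field_simp; ring
    have h4 : (0:ℝ) < a*b / ((a+b+c*x)*(b+c*x)) := by positivity
    simp only [F]
    linarith [h1, h2, h3, h4]
  -- continuity of f on Ioi 0
  have hcont : ContinuousOn f (Set.Ioi (0:ℝ)) := by
    apply ContinuousOn.mul continuousOn_id
    apply ContinuousOn.log
    · exact (continuousOn_const.add (continuousOn_const.div
        (continuousOn_const.add (continuousOn_const.mul continuousOn_id))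
        (fun x hx => (hB x hx).ne')))
    · intro x hx
      have := hB x hx
      have : 0 < a / (b + c*x) := by positivity
      linarith
  have hint : interior (Set.Ioi (0:ℝ)) = Set.Ioi (0:ℝ) := isOpen_Ioi.interior_eq
  refine ⟨?_, ?_, fun x hx => ⟨by rw [hderiv2 x hx]; exact hGneg x hx,
      by rw [hderivf x hx]; exact hFpos x hx⟩⟩
  · apply StrictConcaveOn.concaveOn
    apply strictConcaveOn_of_deriv2_neg (convex_Ioi 0) hcont
    intro x hx
    rw [hint] at hx
    show deriv (deriv f) x < 0
    rw [hderiv2 x hx]; exact hGneg x hx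
  · apply strictMonoOn_of_deriv_pos (convex_Ioi 0) hcont
    intro x hx
    rw [hint] at hx
    rw [hderivf x hx]; exact hFpos x hx
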